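/- Let d ≥ 2, 0 < ξ ≤ 1, and ϑ ∈ [1, d]. Among all finite nonnegative Borel measures H on the unit simplex S₊ ⊂ ℝ^d satisfying ∫ u_j dH = 1 for each j and ∫ max_j u_j dH = ϑ, the supremum of ∫ (Σ_{j=1}^d u_j^ξ)^{1/ξ} dH(u) equals U(ϑ) := (ϑ^ξ + (d-1)^{1-ξ}·(d-ϑ)^ξ)^{1/ξ}, and it is attained by the discrete measure H = Σ_{k=1}^d δ_{u_k}, where u_k has k-th coordinate ϑ/d and all other coordinates (d-ϑ)/(d(d-1)). -/

import Mathlib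

open MeasureTheory

open Real Finset

private lemma sum_ite_aux {d : ℕ} (hd : 1 ≤ d) (k : Fin d) (a b : ℝ) :
    ∑ j : Fin d, (if j = k then a else b) = a + ((d : ℝ) - 1) * b := by
  rw [← Finset.sum_erase_add _ _ (Finset.mem_univ k), if_pos rfl,
    Finset.sum_congr rfl (fun j hj => if_neg (Finset.ne_of_mem_erase hj)),
    Finset.sum_const, Finset.card_erase_of_mem (Finset.mem_univ k), Finset.card_univ,
    Fintype.card_fin, nsmul_eq_mul, Nat.cast_sub hd]
  push_cast
  ring

private lemma holder_aux {d : ℕ} (hd : 0 < d) {ξ : ℝ} (hξ0 : 0 < ξ) (hξ1 : ξ ≤ 1)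
    (u v : Fin d → ℝ) (hu : ∀ j, 0 ≤ u j) (hv : ∀ j, 0 < v j) :
    (∑ j, u j ^ ξ) ^ (1 / ξ) ≤
      (∑ j, v j ^ ξ) ^ ((1 - ξ) / ξ) * ∑ j, u j * v j ^ (ξ - 1) := by
  haveI : Nonempty (Fin d) := Fin.pos_iff_nonempty.mp hd
  set S : ℝ := ∑ j, v j ^ ξ with hS
  have hSpos : 0 < S := Finset.sum_pos (fun j _ => rpow_pos_of_pos (hv j) ξ) Finset.univ_nonempty
  set w : Fin d → ℝ := fun j => v j ^ ξ / S with hw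
  set z : Fin d → ℝ := fun j => (u j / v j) ^ ξ with hz
  have hwnn : ∀ j ∈ Finset.univ, (0:ℝ) ≤ w j :=
    fun j _ => div_nonneg (rpow_nonneg (hv j).le _) hSpos.le
  have hw1 : ∑ j, w j = 1 := by rw [← Finset.sum_div, ← hS, div_self hSpos.ne']
  have hznn : ∀ j ∈ Finset.univ, (0:ℝ) ≤ z j :=
    fun j _ => rpow_nonneg (div_nonneg (hu j) (hv j).le) _
  have hp : (1:ℝ) ≤ 1 / ξ := by rw [le_div_iff₀ hξ0]; linarith
  have key := Real.rpow_arith_mean_le_arith_mean_rpow Finset.univ w z hwnn hw1 hznn hp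
  have hvne : ∀ j, v j ^ ξ ≠ 0 := fun j => (rpow_pos_of_pos (hv j) ξ).ne'
  have hwz : ∀ j, w j * z j = u j ^ ξ / S := by
    intro j
    simp only [hw, hz]
    rw [div_rpow (hu j) (hv j).le]
    field_simp [hvne j]
  have hwz' : ∀ j, w j * z j ^ (1/ξ) = u j * v j ^ (ξ - 1) / S := by
    intro j
    simp only [hw, hz]
    rw [one_div, Real.rpow_rpow_inv (div_nonneg (hu j) (hv j).le) hξ0.ne',
      rpow_sub_one (hv j).ne']
    field_simp [(hv j).ne']
  rw [Finset.sum_congr rfl (fun j _ => hwz j), Finset.sum_congr rfl (fun j _ => hwz' j),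
    ← Finset.sum_div, ← Finset.sum_div,
    div_rpow (Finset.sum_nonneg fun j _ => rpow_nonneg (hu j) ξ) hSpos.le] at key
  have hmul := mul_le_mul_of_nonneg_left key (rpow_nonneg hSpos.le (1/ξ))
  calc (∑ j, u j ^ ξ) ^ (1 / ξ)
      = S ^ (1/ξ) * ((∑ j, u j ^ ξ) ^ (1 / ξ) / S ^ (1/ξ)) := by
        rw [mul_div_cancel₀ _ (rpow_pos_of_pos hSpos _).ne']
    _ ≤ S ^ (1/ξ) * ((∑ j, u j * v j ^ (ξ - 1)) / S) := hmul
    _ = S ^ ((1 - ξ) / ξ) * ∑ j, u j * v j ^ (ξ - 1) := by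
        rw [show (1 - ξ)/ξ = 1/ξ - 1 by field_simp, rpow_sub_one hSpos.ne']
        ring

private lemma integrable_dirac_aux {α : Type*} [MeasurableSpace α] [MeasurableSingletonClass α]
    {f : α → ℝ} (hf : Measurable f) (a : α) : Integrable f (Measure.dirac a) := by
  refine ⟨hf.aestronglyMeasurable, ?_⟩
  simp [HasFiniteIntegral, lintegral_dirac]

private lemma integral_sum_dirac {d : ℕ} (e : Fin d → (Fin d → ℝ)) {f : (Fin d → ℝ) → ℝ}
    (hf : Measurable f) :
    ∫ u, f u ∂(∑ k : Fin d, Measure.dirac (e k)) = ∑ k : Fin d, f (e k) := by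
  rw [MeasureTheory.integral_finset_sum_measure (fun k _ => integrable_dirac_aux hf (e k))]
  simp [integral_dirac]


/-- Theorem 3.6 (closed-form upper bound): among finite measures on the unit simplex
with unit marginals and d-variate extremal coefficient `ϑ`, the supremum of
`∫ (Σ_j u_j^ξ)^{1/ξ} dH` equals `U(ϑ) = (ϑ^ξ + (d-1)^{1-ξ}(d-ϑ)^ξ)^{1/ξ}`, attained
by the discrete measure `H = Σ_{k=1}^d δ_{u_k}` with `u_k` having k-th coordinate `ϑ/d`
and all others `(d-ϑ)/(d(d-1))`. -/
theorem closed_form_upper_bound (d : ℕ) (hd : 2 ≤ d) (ξ : ℝ) (hξ0 : 0 < ξ) (hξ1 : ξ ≤ 1)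
    (ϑ : ℝ) (hϑ : ϑ ∈ Set.Icc (1 : ℝ) d) :
    IsGreatest
      { r : ℝ | ∃ H : Measure (Fin d → ℝ), IsFiniteMeasure H ∧
          H {u | ¬ ((∀ j, 0 ≤ u j) ∧ ∑ j, u j = 1)} = 0 ∧
          (∀ j, ∫ u, u j ∂H = 1) ∧
          (∫ u, (⨆ j, u j) ∂H = ϑ) ∧
          r = ∫ u, (∑ j, (u j) ^ ξ) ^ (1 / ξ) ∂H }
      ((ϑ ^ ξ + ((d : ℝ) - 1) ^ (1 - ξ) * ((d : ℝ) - ϑ) ^ ξ) ^ (1 / ξ)) ∧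
    (∫ u, (∑ j, (u j) ^ ξ) ^ (1 / ξ)
        ∂(∑ k : Fin d, Measure.dirac
            (fun j : Fin d => if j = k then ϑ / d else ((d : ℝ) - ϑ) / (d * ((d : ℝ) - 1)))))
      = (ϑ ^ ξ + ((d : ℝ) - 1) ^ (1 - ξ) * ((d : ℝ) - ϑ) ^ ξ) ^ (1 / ξ) := by
  haveI : Nonempty (Fin d) := Fin.pos_iff_nonempty.mp (by omega)
  obtain ⟨hϑ1, hϑd⟩ := hϑ
  have hd2 : (2:ℝ) ≤ (d:ℝ) := by exact_mod_cast hd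
  have hdpos : (0:ℝ) < d := by linarith
  have hd1 : (0:ℝ) < (d:ℝ) - 1 := by linarith
  set A : ℝ := ϑ / d with hAdef
  set B : ℝ := ((d:ℝ) - ϑ) / (d * ((d:ℝ) - 1)) with hBdef
  have hA : 0 < A := div_pos (by linarith) hdpos
  have hB : 0 ≤ B := div_nonneg (by linarith) (by positivity)
  have hBA : B ≤ A := by
    rw [hAdef, hBdef, div_le_div_iff₀ (by positivity) hdpos]
    nlinarith [mul_nonneg (sub_nonneg.2 hϑ1) (mul_pos hdpos hdpos).le]
  have hABsum : A + ((d:ℝ) - 1) * B = 1 := by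
    rw [hAdef, hBdef]; field_simp; ring
  have hdA : (d:ℝ) * A = ϑ := by rw [hAdef]; field_simp
  have hdB : (d:ℝ) * B = ((d:ℝ) - ϑ) / ((d:ℝ) - 1) := by
    rw [hBdef]; field_simp
  set S : ℝ := A ^ ξ + ((d:ℝ) - 1) * B ^ ξ with hSdef
  have hSpos : 0 < S := by
    have := rpow_pos_of_pos hA ξ
    have := rpow_nonneg hB ξ
    nlinarith
  set e : Fin d → Fin d → ℝ := fun k j => if j = k then A else B with hedef
  -- U = d * S^(1/ξ)
  have hUdK : (ϑ ^ ξ + ((d : ℝ) - 1) ^ (1 - ξ) * ((d : ℝ) - ϑ) ^ ξ) ^ (1 / ξ)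
      = (d:ℝ) * S ^ (1/ξ) := by
    have h1 : ϑ ^ ξ + ((d:ℝ) - 1) ^ (1 - ξ) * ((d:ℝ) - ϑ) ^ ξ = (d:ℝ) ^ ξ * S := by
      have e1 : (d:ℝ)^ξ * A^ξ = ϑ^ξ := by rw [← mul_rpow hdpos.le hA.le, hdA]
      have e2 : (d:ℝ)^ξ * B^ξ = ((d:ℝ)-ϑ)^ξ / ((d:ℝ)-1)^ξ := by
        rw [← mul_rpow hdpos.le hB, hdB, div_rpow (by linarith : (0:ℝ) ≤ (d:ℝ)-ϑ) hd1.le]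
      have e3 : ((d:ℝ)-1)^(1-ξ) = ((d:ℝ)-1) / ((d:ℝ)-1)^ξ := by
        rw [Real.rpow_sub hd1, Real.rpow_one]
      rw [hSdef, mul_add, e1, e3,
        show (d:ℝ)^ξ * (((d:ℝ)-1)*B^ξ) = ((d:ℝ)-1) * ((d:ℝ)^ξ * B^ξ) by ring, e2]
      ring
    rw [h1, mul_rpow (rpow_nonneg hdpos.le ξ) hSpos.le, one_div,
      Real.rpow_rpow_inv hdpos.le hξ0.ne']
  have meas_f : Measurable fun u : Fin d → ℝ => (∑ j, (u j) ^ ξ) ^ (1 / ξ) := by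
    have cont : Continuous fun u : Fin d → ℝ => (∑ j, (u j) ^ ξ) ^ (1 / ξ) := by
      apply Continuous.rpow_const
      · exact continuous_finset_sum _ fun j _ =>
          (continuous_apply j).rpow_const (fun _ => Or.inr hξ0.le)
      · exact fun _ => Or.inr (by positivity)
    exact cont.measurable
  have meas_m : Measurable fun u : Fin d → ℝ => ⨆ j, u j :=
    Measurable.iSup fun j => measurable_pi_apply j
  have hfe : ∀ k, (∑ j, (e k j) ^ ξ) = S := by
    intro k
    rw [Finset.sum_congr rfl (fun j _ => by
      show (e k j) ^ ξ = if j = k then A ^ ξ else B ^ ξ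
      by_cases h : j = k <;> simp [hedef, h])]
    rw [sum_ite_aux (by omega) k, hSdef]
  -- part 2 : the dirac integral
  have part2 : (∫ u, (∑ j, (u j) ^ ξ) ^ (1 / ξ)
        ∂(∑ k : Fin d, Measure.dirac (e k)))
      = (ϑ ^ ξ + ((d : ℝ) - 1) ^ (1 - ξ) * ((d : ℝ) - ϑ) ^ ξ) ^ (1 / ξ) := by
    rw [integral_sum_dirac e meas_f, Finset.sum_congr rfl (fun k _ => by rw [hfe k]),
      Finset.sum_const, Finset.card_univ, Fintype.card_fin, nsmul_eq_mul, hUdK]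
  refine ⟨⟨⟨∑ k : Fin d, Measure.dirac (e k), ?_, ?_, ?_, ?_, part2.symm⟩, ?_⟩, part2⟩
  · -- finite measure
    constructor
    rw [Measure.finset_sum_apply]
    simp
  · -- null outside simplex
    have h1 : MeasurableSet {u : Fin d → ℝ | (∀ j, 0 ≤ u j) ∧ ∑ j, u j = 1} := by
      apply MeasurableSet.inter
      · show MeasurableSet {u : Fin d → ℝ | ∀ j, 0 ≤ u j}
        rw [show {u : Fin d → ℝ | ∀ j, 0 ≤ u j} = ⋂ j, {u | 0 ≤ u j} by ext u; simp]
        exact MeasurableSet.iInter fun j =>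
          measurableSet_le measurable_const (measurable_pi_apply j)
      · exact measurableSet_eq_fun (Finset.univ.measurable_sum fun j _ => measurable_pi_apply j)
          measurable_const
    rw [Measure.finset_sum_apply]
    have : ∀ k : Fin d, Measure.dirac (e k)
        {u : Fin d → ℝ | ¬ ((∀ j, 0 ≤ u j) ∧ ∑ j, u j = 1)} = 0 := by
      intro k
      rw [show {u : Fin d → ℝ | ¬ ((∀ j, 0 ≤ u j) ∧ ∑ j, u j = 1)}
          = {u : Fin d → ℝ | (∀ j, 0 ≤ u j) ∧ ∑ j, u j = 1}ᶜ from rfl,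
        Measure.dirac_apply' _ h1.compl]
      have hek : e k ∈ {u : Fin d → ℝ | (∀ j, 0 ≤ u j) ∧ ∑ j, u j = 1} := by
        constructor
        · intro j
          by_cases h : j = k <;> simp [hedef, h, hA.le, hB]
        · rw [show (∑ j, e k j) = ∑ j : Fin d, (if j = k then A else B) from rfl,
            sum_ite_aux (by omega) k, hABsum]
      simp [Set.indicator_of_notMem, hek]
    rw [Finset.sum_congr rfl (fun k _ => this k)]
    simp
  · -- marginals
    intro j
    rw [integral_sum_dirac e (measurable_pi_apply j)]
    rw [Finset.sum_congr rfl (fun k _ => by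
      show e k j = if k = j then A else B
      by_cases h : k = j <;> simp [hedef, h]
      exact fun h' => absurd h'.symm h)]
    rw [sum_ite_aux (by omega) j, hABsum]
  · -- extremal coefficient
    rw [integral_sum_dirac e meas_m]
    have : ∀ k : Fin d, (⨆ j, e k j) = A := by
      intro k
      apply le_antisymm
      · apply ciSup_le
        intro j
        by_cases h : j = k <;> simp [hedef, h, hBA]
      · have := le_ciSup (Set.Finite.bddAbove (Set.finite_range (e k))) k
        simpa [hedef] using this
    rw [Finset.sum_congr rfl (fun k _ => this k), Finset.sum_const, Finset.card_univ,
      Fintype.card_fin, nsmul_eq_mul, hdA]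
  · -- upper bound
    rintro r ⟨H, hfin, hnull, hmarg, hmax, rfl⟩
    haveI := hfin
    set m : (Fin d → ℝ) → ℝ := fun u => ⨆ j, u j with hmdef
    have hae : ∀ᵐ u ∂H, (∀ j, 0 ≤ u j) ∧ ∑ j, u j = 1 := by
      rw [MeasureTheory.ae_iff]; exact hnull
    have simplex_facts : ∀ u : Fin d → ℝ, ((∀ j, 0 ≤ u j) ∧ ∑ j, u j = 1) →
        (∀ j, u j ≤ 1) ∧ 0 ≤ m u ∧ m u ≤ 1 ∧ (∃ k, u k = m u ∧ ∀ j, u j ≤ u k) := by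
      rintro u ⟨h0, h1⟩
      have hle1 : ∀ j, u j ≤ 1 := fun j => by
        rw [← h1]
        exact Finset.single_le_sum (fun i _ => h0 i) (Finset.mem_univ j)
      obtain ⟨k, hk⟩ := Finite.exists_max u
      have hmk : m u = u k := le_antisymm (ciSup_le hk)
        (le_ciSup (Set.Finite.bddAbove (Set.finite_range u)) k)
      exact ⟨hle1, hmk ▸ h0 k, hmk ▸ hle1 k, ⟨k, hmk.symm, hk⟩⟩
    have int_m : Integrable m H := by
      apply (integrable_const (1:ℝ)).mono' meas_m.aestronglyMeasurable
      filter_upwards [hae] with u hu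
      obtain ⟨_, h0, h1, _⟩ := simplex_facts u hu
      rw [Real.norm_eq_abs, abs_le]; exact ⟨by linarith, h1⟩
    have int_coord : ∀ j, Integrable (fun u => u j) H := by
      intro j
      apply (integrable_const (1:ℝ)).mono' (measurable_pi_apply j).aestronglyMeasurable
      filter_upwards [hae] with u hu
      obtain ⟨hle1, _, _, _⟩ := simplex_facts u hu
      rw [Real.norm_eq_abs, abs_le]; exact ⟨by linarith [hu.1 j], hle1 j⟩
    have htot : ∫ u, (1:ℝ) ∂H = d := by
      have h1 : ∫ u, (1:ℝ) ∂H = ∫ u, ∑ j, u j ∂H := by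
        apply integral_congr_ae
        filter_upwards [hae] with u hu using hu.2.symm
      rw [h1, integral_finset_sum _ (fun j _ => int_coord j)]
      simp [hmarg]
    have int_f : Integrable (fun u => (∑ j, (u j) ^ ξ) ^ (1 / ξ)) H := by
      apply (integrable_const ((d:ℝ) ^ (1/ξ))).mono' meas_f.aestronglyMeasurable
      filter_upwards [hae] with u hu
      rw [Real.norm_eq_abs, abs_of_nonneg
        (rpow_nonneg (Finset.sum_nonneg fun j _ => rpow_nonneg (hu.1 j) ξ) _)]
      apply Real.rpow_le_rpow (Finset.sum_nonneg fun j _ => rpow_nonneg (hu.1 j) ξ) ?_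
        (by positivity)
      calc ∑ j, u j ^ ξ ≤ ∑ _j : Fin d, 1 := Finset.sum_le_sum fun j _ =>
            Real.rpow_le_one (hu.1 j) ((simplex_facts u hu).1 j) hξ0.le
        _ = d := by simp
    by_cases hcase : ϑ = (d:ℝ)
    · -- degenerate case ϑ = d
      have hU : (ϑ ^ ξ + ((d:ℝ)-1)^(1-ξ) * ((d:ℝ)-ϑ)^ξ) ^ (1/ξ) = d := by
        rw [hcase, sub_self, Real.zero_rpow hξ0.ne', mul_zero, add_zero, one_div,
          Real.rpow_rpow_inv hdpos.le hξ0.ne']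
      have hsub : ∫ u, ((1:ℝ) - m u) ∂H = 0 := by
        rw [integral_sub (integrable_const 1) int_m, htot, hmax, hcase, sub_self]
      have hnn : 0 ≤ᵐ[H] fun u => (1:ℝ) - m u := by
        filter_upwards [hae] with u hu
        simp only [Pi.zero_apply]
        linarith [(simplex_facts u hu).2.2.1]
      have hm1 : ∀ᵐ u ∂H, (1:ℝ) - m u = 0 := by
        have h := (integral_eq_zero_iff_of_nonneg_ae hnn
          ((integrable_const (1:ℝ)).sub int_m)).1 hsub
        filter_upwards [h] with u hu using by simpa using hu
      have hf1 : ∀ᵐ u ∂H, (∑ j, (u j) ^ ξ) ^ (1/ξ) = 1 := by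
        filter_upwards [hae, hm1] with u hu hm
        obtain ⟨hle1, _, _, k, hk, hkmax⟩ := simplex_facts u hu
        have huk : u k = 1 := by rw [hk]; linarith
        have hrest : ∀ j ∈ Finset.univ.erase k, u j = (0:ℝ) := by
          have hsum0 : ∑ j ∈ Finset.univ.erase k, u j = 0 := by
            have h2 := Finset.sum_erase_add Finset.univ u (Finset.mem_univ k)
            rw [hu.2, huk] at h2; linarith
          exact fun j hj => (Finset.sum_eq_zero_iff_of_nonneg (fun i _ => hu.1 i)).1 hsum0 j hj
        have hsum : ∑ j, (u j)^ξ = 1 := by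
          rw [← Finset.sum_erase_add _ _ (Finset.mem_univ k), huk, Real.one_rpow,
            Finset.sum_congr rfl (fun j hj => by
              rw [hrest j hj, Real.zero_rpow hξ0.ne']), Finset.sum_const]
          simp
        rw [hsum, Real.one_rpow]
      calc ∫ u, (∑ j, (u j) ^ ξ) ^ (1/ξ) ∂H = ∫ u, (1:ℝ) ∂H := integral_congr_ae hf1
        _ = d := htot
        _ = (ϑ ^ ξ + ((d:ℝ)-1)^(1-ξ) * ((d:ℝ)-ϑ)^ξ) ^ (1/ξ) := hU.symm
        _ ≤ (ϑ ^ ξ + ((d:ℝ)-1)^(1-ξ) * ((d:ℝ)-ϑ)^ξ) ^ (1/ξ) := le_rfl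
    · -- main case ϑ < d
      have hϑlt : ϑ < d := lt_of_le_of_ne hϑd hcase
      have hBpos : 0 < B := div_pos (by linarith) (by positivity)
      have hpt : ∀ᵐ u ∂H, (∑ j, (u j) ^ ξ) ^ (1/ξ) ≤
          S ^ ((1-ξ)/ξ) * ((A ^ (ξ-1) - B ^ (ξ-1)) * m u + B ^ (ξ-1)) := by
        filter_upwards [hae] with u hu
        obtain ⟨hle1, hm0, hm1', k, hk, hkmax⟩ := simplex_facts u hu
        have key := holder_aux (show 0 < d by omega) hξ0 hξ1 u (e k) hu.1 (fun j => by
          by_cases h : j = k <;> simp [hedef, h, hA, hBpos])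
        rw [hfe k] at key
        refine key.trans (le_of_eq ?_)
        congr 1
        have hsum_er : ∑ j ∈ Finset.univ.erase k, u j = 1 - u k := by
          have h2 := Finset.sum_erase_add Finset.univ u (Finset.mem_univ k)
          rw [hu.2] at h2; linarith
        rw [← Finset.sum_erase_add _ _ (Finset.mem_univ k),
          Finset.sum_congr rfl (fun j hj => by
            rw [show e k j = B from by simp [hedef, Finset.ne_of_mem_erase hj]]),
          ← Finset.sum_mul, hsum_er,
          show e k k = A from by simp [hedef], ← hk]
        ring
      have int_rhs : Integrable
          (fun u => S ^ ((1-ξ)/ξ) * ((A ^ (ξ-1) - B ^ (ξ-1)) * m u + B ^ (ξ-1))) H :=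
        ((int_m.const_mul _).add (integrable_const _)).const_mul _
      have hle := integral_mono_ae int_f int_rhs hpt
      have hμ : (H Set.univ).toReal = d := by
        have h2 := htot; rwa [integral_const, smul_eq_mul, mul_one] at h2
      have hrhs : ∫ u, S ^ ((1-ξ)/ξ) * ((A ^ (ξ-1) - B ^ (ξ-1)) * m u + B ^ (ξ-1)) ∂H
          = S ^ ((1-ξ)/ξ) * ((A ^ (ξ-1) - B ^ (ξ-1)) * ϑ + B ^ (ξ-1) * d) := by
        rw [integral_const_mul, integral_add (int_m.const_mul _) (integrable_const _),
          integral_const_mul, hmax, integral_const, measureReal_def, hμ, smul_eq_mul]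
        ring
      have halg : S ^ ((1-ξ)/ξ) * ((A ^ (ξ-1) - B ^ (ξ-1)) * ϑ + B ^ (ξ-1) * d)
          = (ϑ ^ ξ + ((d:ℝ)-1)^(1-ξ) * ((d:ℝ)-ϑ)^ξ) ^ (1/ξ) := by
        have eA : A ^ (ξ-1) * ϑ = (d:ℝ) * A ^ ξ := by
          rw [Real.rpow_sub_one hA.ne', ← hdA]
          field_simp
        have hdmB : (d:ℝ) - ϑ = (d:ℝ) * (((d:ℝ)-1) * B) := by
          rw [hBdef]; field_simp
        have eB : B ^ (ξ-1) * ((d:ℝ) - ϑ) = (d:ℝ) * (((d:ℝ)-1) * B ^ ξ) := by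
          rw [Real.rpow_sub_one hBpos.ne', hdmB]
          field_simp
        have expand : (A ^ (ξ-1) - B ^ (ξ-1)) * ϑ + B ^ (ξ-1) * (d:ℝ)
            = A ^ (ξ-1) * ϑ + B ^ (ξ-1) * ((d:ℝ) - ϑ) := by ring
        rw [expand, eA, eB, hUdK,
          show S^((1-ξ)/ξ) * ((d:ℝ)*A^ξ + (d:ℝ)*(((d:ℝ)-1)*B^ξ))
            = (d:ℝ) * (S^((1-ξ)/ξ) * S) from by rw [hSdef]; ring]
        congr 1
        rw [show S^((1-ξ)/ξ) * S = S^((1-ξ)/ξ) * S^(1:ℝ) from by rw [Real.rpow_one],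
          ← Real.rpow_add hSpos,
          show (1-ξ)/ξ + 1 = 1/ξ from by field_simp; ring]
      exact hle.trans (le_of_eq (hrhs.trans halg))
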